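/- arXiv:2212.14841 — 8 statements merged into one kernel-verified Lean document; each statement's English description precedes it below -/
import Mathlib

section
/- For integers m ≥ 0 and n ≥ 1 with n dividing 2m+1, and any real number a, we have ∑_{j=0}^m (-4)^j * C(m+j, 2j) * ∑_{k=0}^{n-1} sin(a + 2kπ/n) * cos(a + 2kπ/n)^{2j} = (-1)^m * n * sin((2m+1)a). -/
open Real Finset

lemma chooseId_aux (p i : ℕ) :
    Nat.choose (p+3) (2*i+2) + Nat.choose (p+1) (2*i+2)
      = 2 * Nat.choose (p+2) (2*i+2) + Nat.choose (p+1) (2*i) := by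
  have h1 : Nat.choose (p+3) (2*i+2) = Nat.choose (p+2) (2*i+1) + Nat.choose (p+2) (2*i+2) :=
    Nat.choose_succ_succ' (p+2) (2*i+1)
  have h2 : Nat.choose (p+2) (2*i+1) = Nat.choose (p+1) (2*i) + Nat.choose (p+1) (2*i+1) :=
    Nat.choose_succ_succ' (p+1) (2*i)
  have h3 : Nat.choose (p+2) (2*i+2) = Nat.choose (p+1) (2*i+1) + Nat.choose (p+1) (2*i+2) :=
    Nat.choose_succ_succ' (p+1) (2*i+1)
  rw [h1, h2, h3]; ring

lemma Ssum_aux (m : ℕ) (s x : ℝ) :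
    ∑ j ∈ range (m+3), (-4:ℝ)^j * (Nat.choose (m+2+j) (2*j)) * (s * x^(2*j))
      = (2 - 4*x^2) * ∑ j ∈ range (m+2), (-4:ℝ)^j * (Nat.choose (m+1+j) (2*j)) * (s * x^(2*j))
        - ∑ j ∈ range (m+1), (-4:ℝ)^j * (Nat.choose (m+j) (2*j)) * (s * x^(2*j)) := by
  set G : ℕ → ℝ := fun j => if j = 0 then 0 else (-4:ℝ)^j * (Nat.choose (m+j) (2*j-2)) * (s * x^(2*j)) with hG
  have hB : ∑ j ∈ range (m+1), (-4:ℝ)^j * (Nat.choose (m+j) (2*j)) * (s * x^(2*j))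
      = ∑ j ∈ range (m+3), (-4:ℝ)^j * (Nat.choose (m+j) (2*j)) * (s * x^(2*j)) := by
    apply Finset.sum_subset
    · intro y hy; simp only [Finset.mem_range] at *; omega
    · intro y hy hys; simp only [Finset.mem_range] at hy hys
      rw [Nat.choose_eq_zero_of_lt (by omega)]; simp
  have hA : ∑ j ∈ range (m+2), 2 * ((-4:ℝ)^j * (Nat.choose (m+1+j) (2*j)) * (s * x^(2*j)))
      = ∑ j ∈ range (m+3), 2 * ((-4:ℝ)^j * (Nat.choose (m+1+j) (2*j)) * (s * x^(2*j))) := by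
    apply Finset.sum_subset
    · intro y hy; simp only [Finset.mem_range] at *; omega
    · intro y hy hys; simp only [Finset.mem_range] at hy hys
      rw [Nat.choose_eq_zero_of_lt (by omega)]; simp
  have hGe : ∀ j : ℕ, G (j+1) = (-4:ℝ)^(j+1) * (Nat.choose (m+1+j) (2*j)) * (s * x^(2*(j+1))) := by
    intro j
    have h1 : 2*(j+1)-2 = 2*j := by omega
    have h2 : m+(j+1) = m+1+j := by omega
    simp only [hG]
    rw [if_neg (Nat.succ_ne_zero j), h1, h2]
  have hmul : (2 - 4*x^2) * ∑ j ∈ range (m+2), (-4:ℝ)^j * (Nat.choose (m+1+j) (2*j)) * (s * x^(2*j))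
      = (∑ j ∈ range (m+3), 2 * ((-4:ℝ)^j * (Nat.choose (m+1+j) (2*j)) * (s * x^(2*j))))
        + ∑ j ∈ range (m+3), G j := by
    have hsplit : (2 - 4*x^2) * ∑ j ∈ range (m+2), (-4:ℝ)^j * (Nat.choose (m+1+j) (2*j)) * (s * x^(2*j))
        = (∑ j ∈ range (m+2), 2 * ((-4:ℝ)^j * (Nat.choose (m+1+j) (2*j)) * (s * x^(2*j))))
          + ∑ j ∈ range (m+2), (-4*x^2) * ((-4:ℝ)^j * (Nat.choose (m+1+j) (2*j)) * (s * x^(2*j))) := by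
      rw [← Finset.sum_add_distrib, Finset.mul_sum]
      apply Finset.sum_congr rfl; intro j _; ring
    rw [hsplit, hA]
    congr 1
    rw [Finset.sum_range_succ' (f := G) (n := m+2)]
    have hG0 : G 0 = 0 := by simp [hG]
    rw [hG0, add_zero]
    apply Finset.sum_congr rfl
    intro j hj
    rw [hGe j]; ring
  rw [hmul, hB, ← Finset.sum_add_distrib, ← Finset.sum_sub_distrib]
  apply Finset.sum_congr rfl
  intro j hj
  match j with
  | 0 => simp [hG]; ring
  | (i+1) =>
    have key := chooseId_aux (m+i) i
    have hc : (Nat.choose (m+i+3) (2*i+2) : ℝ) + (Nat.choose (m+i+1) (2*i+2) : ℝ)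
        = 2 * (Nat.choose (m+i+2) (2*i+2) : ℝ) + (Nat.choose (m+i+1) (2*i) : ℝ) := by
      exact_mod_cast congrArg (Nat.cast : ℕ → ℝ) key
    rw [hGe i]
    have e1 : m+2+(i+1) = m+i+3 := by omega
    have e2 : m+1+(i+1) = m+i+2 := by omega
    have e2' : m+1+i = m+i+1 := by omega
    have e3 : m+(i+1) = m+i+1 := by omega
    have e4 : 2*(i+1) = 2*i+2 := by omega
    rw [e1, e2, e2', e3, e4]
    linear_combination ((-4:ℝ)^(i+1) * (s * x^(2*i+2))) * hc

lemma keyLem_aux : ∀ (m : ℕ) (θ : ℝ),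
    ∑ j ∈ range (m+1), (-4:ℝ)^j * (Nat.choose (m+j) (2*j)) * (Real.sin θ * Real.cos θ ^ (2*j))
      = (-1:ℝ)^m * Real.sin ((2*m+1)*θ) := by
  intro m
  induction m using Nat.strong_induction_on with
  | _ m ih =>
    match m, ih with
    | 0, _ =>
      intro θ
      norm_num
    | 1, _ =>
      intro θ
      rw [Finset.sum_range_succ, Finset.sum_range_succ, Finset.sum_range_zero]
      have h3 : Real.sin (3*θ) = 3 * Real.sin θ - 4 * Real.sin θ ^ 3 := Real.sin_three_mul θ
      have hp : Real.sin θ ^ 2 + Real.cos θ ^ 2 = 1 := Real.sin_sq_add_cos_sq θ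
      have : ((2:ℝ)*(1:ℕ)+1) * θ = 3*θ := by push_cast; ring
      rw [this, h3]
      norm_num
      linear_combination (-4*Real.sin θ) * hp
    | (m+2), ih =>
      intro θ
      have ih1 := ih (m+1) (by omega) θ
      have ih0 := ih m (by omega) θ
      have e1 : m+2+1 = m+3 := rfl
      rw [e1, Ssum_aux m (Real.sin θ) (Real.cos θ), ih1, ih0]
      have a1 : ((2:ℝ)*(↑(m+1):ℝ)+1)*θ = (2*(m:ℝ)+3)*θ := by push_cast; ring
      have a2 : ((2:ℝ)*(↑(m+2):ℝ)+1)*θ = (2*(m:ℝ)+5)*θ := by push_cast; ring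
      rw [a1, a2]
      have h1 : Real.sin ((2*(m:ℝ)+5)*θ)
          = 2*Real.cos (2*θ) * Real.sin ((2*(m:ℝ)+3)*θ) - Real.sin ((2*(m:ℝ)+1)*θ) := by
        have e1 : (2*(m:ℝ)+5)*θ = (2*(m:ℝ)+3)*θ + 2*θ := by ring
        have e2 : (2*(m:ℝ)+1)*θ = (2*(m:ℝ)+3)*θ - 2*θ := by ring
        rw [e1, e2, Real.sin_add, Real.sin_sub]; ring
      have h2 : Real.cos (2*θ) = 2*Real.cos θ^2 - 1 := Real.cos_two_mul θ
      rw [h1, h2]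
      ring

theorem stmt_0 (m n : ℕ) (hn : 1 ≤ n) (hdvd : n ∣ 2 * m + 1) (a : ℝ) :
    ∑ j ∈ Finset.range (m + 1), (-4 : ℝ) ^ j * (Nat.choose (m + j) (2 * j)) *
      ∑ k ∈ Finset.range n, Real.sin (a + 2 * k * π / n) * Real.cos (a + 2 * k * π / n) ^ (2 * j)
    = (-1 : ℝ) ^ m * n * Real.sin ((2 * m + 1) * a) := by
  have hn0 : (n:ℝ) ≠ 0 := by positivity
  obtain ⟨t, ht⟩ := hdvd
  have hcast : (2*(m:ℝ)+1) = (n:ℝ) * t := by exact_mod_cast congrArg (Nat.cast : ℕ → ℝ) ht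
  calc ∑ j ∈ Finset.range (m + 1), (-4 : ℝ) ^ j * (Nat.choose (m + j) (2 * j)) *
      ∑ k ∈ Finset.range n, Real.sin (a + 2 * k * π / n) * Real.cos (a + 2 * k * π / n) ^ (2 * j)
      = ∑ j ∈ Finset.range (m + 1), ∑ k ∈ Finset.range n, (-4 : ℝ) ^ j * (Nat.choose (m + j) (2 * j)) *
          (Real.sin (a + 2 * k * π / n) * Real.cos (a + 2 * k * π / n) ^ (2 * j)) := by
        apply Finset.sum_congr rfl; intro j _; rw [Finset.mul_sum]
    _ = ∑ k ∈ Finset.range n, ∑ j ∈ Finset.range (m + 1), (-4 : ℝ) ^ j * (Nat.choose (m + j) (2 * j)) *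
          (Real.sin (a + 2 * k * π / n) * Real.cos (a + 2 * k * π / n) ^ (2 * j)) := Finset.sum_comm
    _ = ∑ k ∈ Finset.range n, (-1:ℝ)^m * Real.sin ((2*m+1) * a) := by
        apply Finset.sum_congr rfl
        intro k _
        rw [keyLem_aux m (a + 2 * k * π / n)]
        congr 1
        have harg : (2*(m:ℝ)+1) * (a + 2 * k * π / n) = (2*m+1)*a + (k*t : ℕ) * (2*π) := by
          push_cast
          rw [hcast]
          field_simp
        rw [harg, Real.sin_add_nat_mul_two_pi]
    _ = (-1 : ℝ) ^ m * n * Real.sin ((2 * m + 1) * a) := by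
        rw [Finset.sum_const, Finset.card_range, nsmul_eq_mul]; ring
end

section
/- For integers m ≥ 0 and n ≥ 1 with n not dividing 2m+1, and any real number a, we have ∑_{j=0}^m (-4)^j * C(m+j, 2j) * ∑_{k=0}^{n-1} sin(a + 2kπ/n) * cos(a + 2kπ/n)^{2j} = 0. -/
open Real Finset


lemma lemB (n s : ℕ) (hn : 1 ≤ n) (h : ¬ n ∣ s) (b : ℝ) :
    ∑ k ∈ Finset.range n, Real.sin (b + k * (2 * π * s / n)) = 0 := by
  have hn0 : (0:ℝ) < n := by exact_mod_cast hn
  have hn' : (n : ℂ) ≠ 0 := by exact_mod_cast hn0.ne'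
  set ζ : ℂ := Complex.exp ((2 * π * s / n : ℝ) * Complex.I) with hζ
  have hζn : ζ ^ n = 1 := by
    rw [hζ, ← Complex.exp_nat_mul]
    have : (n : ℂ) * ((2 * π * s / n : ℝ) * Complex.I) = (s : ℤ) * (2 * π * Complex.I) := by
      push_cast
      field_simp
    rw [this, Complex.exp_int_mul_two_pi_mul_I]
  have hζ1 : ζ ≠ 1 := by
    intro hq1
    rw [hζ, Complex.exp_eq_one_iff] at hq1
    obtain ⟨q, hq⟩ := hq1
    apply h
    have hq' : ((2 * π * s / n : ℝ) : ℂ) = (q : ℂ) * (2 * π) := by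
      have hI : (Complex.I : ℂ) ≠ 0 := Complex.I_ne_zero
      apply mul_right_cancel₀ hI
      rw [hq]; ring
    have hr : (2 * π * s / n : ℝ) = q * (2 * π) := by exact_mod_cast hq'
    have hpi : (0:ℝ) < π := Real.pi_pos
    have hs : (s : ℝ) = q * n := by
      field_simp at hr
      nlinarith [hr]
    have hz : (s : ℤ) = q * n := by exact_mod_cast hs
    have : (n : ℤ) ∣ (s : ℤ) := ⟨q, by linarith [hz]⟩
    exact_mod_cast this
  have hsum : ∑ k ∈ Finset.range n, ζ ^ k = 0 := by
    rw [geom_sum_eq hζ1, hζn]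
    simp
  have key : ∑ k ∈ Finset.range n, Complex.exp (((b + k * (2 * π * s / n) : ℝ)) * Complex.I) = 0 := by
    have : ∀ k ∈ Finset.range n, Complex.exp (((b + k * (2 * π * s / n) : ℝ)) * Complex.I)
        = Complex.exp ((b:ℝ) * Complex.I) * ζ ^ k := by
      intro k _
      rw [hζ, ← Complex.exp_nat_mul, ← Complex.exp_add]
      congr 1
      push_cast
      ring
    rw [Finset.sum_congr rfl this, ← Finset.mul_sum, hsum, mul_zero]
  have hsin : ∀ x : ℝ, Real.sin x = (Complex.exp ((x:ℂ) * Complex.I)).im :=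
    fun x => (Complex.exp_ofReal_mul_I_im x).symm
  simp only [hsin]
  rw [← Complex.im_sum, key]
  rfl

lemma choose_id (p q : ℕ) :
    (p + 2).choose (q + 2) + p.choose (q + 2) = 2 * (p + 1).choose (q + 2) + p.choose q := by
  have h1 : (p + 2).choose (q + 2) = (p+1).choose (q+1) + (p+1).choose (q+2) :=
    Nat.choose_succ_succ (p+1) (q+1)
  have h2 : (p + 1).choose (q + 1) = p.choose q + p.choose (q+1) :=
    Nat.choose_succ_succ p q
  have h3 : (p + 1).choose (q + 2) = p.choose (q+1) + p.choose (q+2) :=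
    Nat.choose_succ_succ p (q+1)
  omega

lemma recA (k : ℕ) (x : ℝ) :
    ∑ j ∈ Finset.range (k + 3), (-4:ℝ)^j * ((k + 2 + j).choose (2*j)) * x^(2*j)
      = (2 - 4 * x^2) * ∑ j ∈ Finset.range (k + 2), (-4:ℝ)^j * ((k + 1 + j).choose (2*j)) * x^(2*j)
        - ∑ j ∈ Finset.range (k + 1), (-4:ℝ)^j * ((k + j).choose (2*j)) * x^(2*j) := by
  have e1 : ∑ j ∈ Finset.range (k + 3), (-4:ℝ)^j * ((k + j).choose (2*j)) * x^(2*j)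
      = ∑ j ∈ Finset.range (k + 1), (-4:ℝ)^j * ((k + j).choose (2*j)) * x^(2*j) := by
    rw [Finset.sum_range_succ, Finset.sum_range_succ (n := k+1),
      Nat.choose_eq_zero_of_lt (show k + (k+1) < 2*(k+1) by omega),
      Nat.choose_eq_zero_of_lt (show k + (k+2) < 2*(k+2) by omega)]
    simp
  have e2 : ∑ j ∈ Finset.range (k + 3), (-4:ℝ)^j * ((k + 1 + j).choose (2*j)) * x^(2*j)
      = ∑ j ∈ Finset.range (k + 2), (-4:ℝ)^j * ((k + 1 + j).choose (2*j)) * x^(2*j) := by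
    rw [Finset.sum_range_succ,
      Nat.choose_eq_zero_of_lt (show k + 1 + (k+2) < 2*(k+2) by omega)]
    simp
  have e3 : ∑ j ∈ Finset.range (k + 3), (-4:ℝ)^j * ((k + j).choose (2*j - 2)) * x^(2*j)
      = 1 + (-4) * x^2 * ∑ j ∈ Finset.range (k + 2), (-4:ℝ)^j * ((k + 1 + j).choose (2*j)) * x^(2*j) := by
    rw [Finset.sum_range_succ', Finset.mul_sum, add_comm]
    congr 1
    · simp
    · apply Finset.sum_congr rfl
      intro j _
      rw [show 2*(j+1)-2 = 2*j by omega, show k + (j+1) = k+1+j by omega]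
      ring
  have hterm : ∑ j ∈ Finset.range (k + 2),
        ((-4:ℝ)^(j+1) * ((k + 2 + (j+1)).choose (2*(j+1))) * x^(2*(j+1))
          + (-4:ℝ)^(j+1) * ((k + (j+1)).choose (2*(j+1))) * x^(2*(j+1)))
      = ∑ j ∈ Finset.range (k + 2),
        (2 * ((-4:ℝ)^(j+1) * ((k + 1 + (j+1)).choose (2*(j+1))) * x^(2*(j+1)))
          + (-4:ℝ)^(j+1) * ((k + (j+1)).choose (2*(j+1) - 2)) * x^(2*(j+1))) := by
    apply Finset.sum_congr rfl
    intro j _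
    have hn : (k+2+(j+1)).choose (2*(j+1)) + (k+(j+1)).choose (2*(j+1))
        = 2*(k+1+(j+1)).choose (2*(j+1)) + (k+(j+1)).choose (2*(j+1)-2) := by
      have h := choose_id (k+1+j) (2*j)
      rw [show k+2+(j+1) = (k+1+j)+2 by omega, show k+(j+1) = k+1+j by omega,
        show k+1+(j+1) = (k+1+j)+1 by omega, show 2*(j+1) = 2*j+2 by omega,
        show 2*j+2-2 = 2*j by omega]
      omega
    have hc : ((k+2+(j+1)).choose (2*(j+1)) : ℝ) + ((k+(j+1)).choose (2*(j+1)) : ℝ)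
        = 2*((k+1+(j+1)).choose (2*(j+1)) : ℝ) + ((k+(j+1)).choose (2*(j+1)-2) : ℝ) := by
      exact_mod_cast hn
    linear_combination ((-4:ℝ)^(j+1) * x^(2*(j+1))) * hc
  have main : ∑ j ∈ Finset.range (k + 3),
        ((-4:ℝ)^j * ((k + 2 + j).choose (2*j)) * x^(2*j)
          + (-4:ℝ)^j * ((k + j).choose (2*j)) * x^(2*j)) + 1
      = ∑ j ∈ Finset.range (k + 3),
        (2 * ((-4:ℝ)^j * ((k + 1 + j).choose (2*j)) * x^(2*j))
          + (-4:ℝ)^j * ((k + j).choose (2*j - 2)) * x^(2*j)) := by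
    conv_lhs => rw [Finset.sum_range_succ']
    conv_rhs => rw [Finset.sum_range_succ']
    rw [hterm]
    norm_num
    ring
  rw [Finset.sum_add_distrib, Finset.sum_add_distrib] at main
  rw [e1] at main
  rw [e3, ← Finset.mul_sum, e2] at main
  linear_combination main


lemma lemA (m : ℕ) : ∀ θ : ℝ,
    ∑ j ∈ Finset.range (m + 1), (-4:ℝ)^j * ((m + j).choose (2*j)) * (Real.sin θ * Real.cos θ ^ (2*j))
      = (-1:ℝ)^m * Real.sin ((2*(m:ℝ) + 1) * θ) := by
  induction m using Nat.strong_induction_on with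
  | _ m ih =>
    match m, ih with
    | 0, _ =>
      intro θ
      simp
    | 1, _ =>
      intro θ
      have h3 : Real.sin (3*θ) = 3*Real.sin θ - 4*Real.sin θ^3 := Real.sin_three_mul θ
      have hp : Real.sin θ^2 + Real.cos θ^2 = 1 := Real.sin_sq_add_cos_sq θ
      rw [Finset.sum_range_succ, Finset.sum_range_succ, Finset.sum_range_zero]
      norm_num
      linear_combination h3 - 4*Real.sin θ * hp
    | (k+2), ih =>
      intro θ
      have h1 := ih k (by omega) θ
      have h2 := ih (k+1) (by omega) θ
      have hconv : ∀ (M : ℕ) (f : ℕ → ℕ),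
          ∑ j ∈ Finset.range M, (-4:ℝ)^j * (f j) * (Real.sin θ * Real.cos θ ^ (2*j))
            = Real.sin θ * ∑ j ∈ Finset.range M, (-4:ℝ)^j * (f j) * Real.cos θ ^ (2*j) := by
        intro M f
        rw [Finset.mul_sum]
        apply Finset.sum_congr rfl
        intro j _
        ring
      rw [hconv] at h1 h2 ⊢
      rw [show k+2+1 = k+3 by omega, recA k (Real.cos θ)]
      push_cast at h1 h2 ⊢
      set B := (2*((k:ℝ)+1) + 1) * θ with hB
      have hadd := Real.sin_add B (2*θ)
      have hsub := Real.sin_sub B (2*θ)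
      have hc2 : Real.cos (2*θ) = 2 * Real.cos θ^2 - 1 := Real.cos_two_mul θ
      have eA : B + 2*θ = (2*((k:ℝ)+2) + 1) * θ := by rw [hB]; ring
      have eC : B - 2*θ = (2*(k:ℝ) + 1) * θ := by rw [hB]; ring
      rw [eA] at hadd
      rw [eC] at hsub
      linear_combination (2 - 4*Real.cos θ^2) * h2 - h1 - (-1:ℝ)^k * hadd
        - (-1:ℝ)^k * hsub - 2*(-1:ℝ)^k * Real.sin B * hc2

theorem stmt_1 (m n : ℕ) (hn : 1 ≤ n) (hdvd : ¬ n ∣ 2 * m + 1) (a : ℝ) :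
    ∑ j ∈ Finset.range (m + 1), (-4 : ℝ) ^ j * (Nat.choose (m + j) (2 * j)) *
      ∑ k ∈ Finset.range n, Real.sin (a + 2 * k * π / n) * Real.cos (a + 2 * k * π / n) ^ (2 * j)
    = 0 := by
  have hn0 : (0:ℝ) < n := by exact_mod_cast hn
  have hswap : ∑ j ∈ Finset.range (m + 1), (-4 : ℝ) ^ j * (Nat.choose (m + j) (2 * j)) *
      ∑ k ∈ Finset.range n, Real.sin (a + 2 * k * π / n) * Real.cos (a + 2 * k * π / n) ^ (2 * j)
      = ∑ k ∈ Finset.range n, ∑ j ∈ Finset.range (m + 1),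
          (-4 : ℝ) ^ j * (Nat.choose (m + j) (2 * j)) *
            (Real.sin (a + 2 * k * π / n) * Real.cos (a + 2 * k * π / n) ^ (2 * j)) := by
    rw [Finset.sum_comm]
    apply Finset.sum_congr rfl
    intro j _
    rw [Finset.mul_sum]
  rw [hswap]
  have hk : ∀ k ∈ Finset.range n, ∑ j ∈ Finset.range (m + 1),
      (-4 : ℝ) ^ j * (Nat.choose (m + j) (2 * j)) *
        (Real.sin (a + 2 * k * π / n) * Real.cos (a + 2 * k * π / n) ^ (2 * j))
      = (-1:ℝ)^m * Real.sin ((2*(m:ℝ)+1)*a + k * (2 * π * (2*m+1 : ℕ) / n)) := by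
    intro k _
    rw [lemA m (a + 2 * k * π / n)]
    congr 1
    congr 1
    push_cast
    field_simp
  rw [Finset.sum_congr rfl hk, ← Finset.mul_sum, lemB n (2*m+1) hn hdvd ((2*(m:ℝ)+1)*a), mul_zero]
end

section
/- For integers m ≥ 0 and n ≥ 1 with n dividing 2(m+1), and any real number a, we have ∑_{j=0}^m (-4)^j * C(m+j+1, 2j+1) * ∑_{k=0}^{n-1} sin(a + 2kπ/n) * cos(a + 2kπ/n)^{2j+1} = (-1)^m * (n/2) * sin(2(m+1)a). -/
open Real Finset

lemma chooseRec (m i : ℕ) :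
    (m+i+4).choose (2*i+3) + (m+i+2).choose (2*i+3)
      = 2 * (m+i+3).choose (2*i+3) + (m+i+2).choose (2*i+1) := by
  have h1 := Nat.choose_succ_succ (m+i+3) (2*i+2)
  have h2 := Nat.choose_succ_succ (m+i+2) (2*i+2)
  have h3 := Nat.choose_succ_succ (m+i+2) (2*i+1)
  have e1 : m+i+3+1 = m+i+4 := by omega
  have e2 : 2*i+2+1 = 2*i+3 := by omega
  have e3 : m+i+2+1 = m+i+3 := by omega
  have e4 : 2*i+1+1 = 2*i+2 := by omega
  simp only [Nat.succ_eq_add_one, e1, e2, e3, e4] at h1 h2 h3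
  omega

noncomputable def Pf (m : ℕ) (θ : ℝ) : ℝ :=
  ∑ j ∈ Finset.range (m+1),
    (-4:ℝ)^j * ((m+j+1).choose (2*j+1)) * (Real.sin θ * Real.cos θ^(2*j+1))

lemma sumRec (m : ℕ) (θ : ℝ) :
    Pf (m+2) θ = -2*Real.cos (2*θ) * Pf (m+1) θ - Pf m θ := by
  unfold Pf
  set s := Real.sin θ with hs
  set c := Real.cos θ with hcc
  have hc2 : Real.cos (2*θ) = 2*c^2 - 1 := Real.cos_two_mul θ
  rw [hc2]
  set A : ℕ → ℝ := fun j => (-4:ℝ)^j * ((m+2+j+1).choose (2*j+1)) * (s * c^(2*j+1)) with hA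
  set q : ℕ → ℝ := fun j => (-4:ℝ)^j * ((m+1+j+1).choose (2*j+1)) * (s * c^(2*j+1)) with hq
  set f : ℕ → ℝ := fun j => (-4:ℝ)^j * ((m+j+1).choose (2*j+1)) * (s * c^(2*j+1)) with hf
  have key : ∑ j ∈ Finset.range (m+3), (A j - (2*q j - f j))
      = ∑ i ∈ Finset.range (m+2), (-4*c^2) * q i := by
    rw [Finset.sum_range_succ']
    have h0 : A 0 - (2*q 0 - f 0) = 0 := by
      simp only [hA, hq, hf]
      push_cast [Nat.choose_one_right]
      ring
    rw [h0, add_zero]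
    refine Finset.sum_congr rfl fun i _ => ?_
    simp only [hA, hq, hf]
    have hcr := chooseRec m i
    have e1 : m+2+(i+1)+1 = m+i+4 := by omega
    have e2 : 2*(i+1)+1 = 2*i+3 := by omega
    have e3 : m+1+(i+1)+1 = m+i+3 := by omega
    have e4 : m+(i+1)+1 = m+i+2 := by omega
    have e5 : m+1+i+1 = m+i+2 := by omega
    rw [e1, e2, e3, e4, e5]
    have hcrR : ((m+i+4).choose (2*i+3) : ℝ)
        = 2 * (m+i+3).choose (2*i+3) + (m+i+2).choose (2*i+1)
          - (m+i+2).choose (2*i+3) := by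
      have : ((m+i+4).choose (2*i+3) + (m+i+2).choose (2*i+3) : ℝ)
          = 2 * (m+i+3).choose (2*i+3) + (m+i+2).choose (2*i+1) := by exact_mod_cast hcr
      linarith
    rw [hcrR]
    have hp : c^(2*i+3) = c^(2*i+1) * c^2 := by ring
    rw [hp]
    ring
  have hqext : ∑ j ∈ Finset.range (m+3), q j = ∑ j ∈ Finset.range (m+2), q j := by
    rw [Finset.sum_range_succ]
    have : ((m+1+(m+2)+1).choose (2*(m+2)+1) : ℝ) = 0 := by
      norm_cast; exact Nat.choose_eq_zero_of_lt (by omega)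
    simp [hq, this]
  have hfext : ∑ j ∈ Finset.range (m+3), f j = ∑ j ∈ Finset.range (m+1), f j := by
    rw [Finset.sum_range_succ, Finset.sum_range_succ]
    have z1 : ((m+(m+1)+1).choose (2*(m+1)+1) : ℝ) = 0 := by
      norm_cast; exact Nat.choose_eq_zero_of_lt (by omega)
    have z2 : ((m+(m+2)+1).choose (2*(m+2)+1) : ℝ) = 0 := by
      norm_cast; exact Nat.choose_eq_zero_of_lt (by omega)
    simp [hf, z1, z2]
  have expand : ∑ j ∈ Finset.range (m+3), A j
      = ∑ j ∈ Finset.range (m+3), (A j - (2*q j - f j))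
        + (2 * ∑ j ∈ Finset.range (m+3), q j - ∑ j ∈ Finset.range (m+3), f j) := by
    rw [Finset.sum_sub_distrib, Finset.sum_sub_distrib, Finset.mul_sum]
    ring
  have hg : ∑ i ∈ Finset.range (m+2), (-4*c^2) * q i
      = (-4*c^2) * ∑ i ∈ Finset.range (m+2), q i := by
    rw [Finset.mul_sum]
  calc ∑ j ∈ Finset.range (m+2+1), A j
      = ∑ j ∈ Finset.range (m+3), A j := rfl
    _ = -2*(2*c^2-1) * ∑ j ∈ Finset.range (m+1+1), q j
          - ∑ j ∈ Finset.range (m+1), f j := by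
        rw [expand, key, hqext, hfext, hg]; ring

lemma keyP : ∀ (m : ℕ) (θ : ℝ), Pf m θ = (-1:ℝ)^m * Real.sin (2*(m+1)*θ) / 2
  | 0, θ => by
      simp [Pf, Real.sin_two_mul]
      ring
  | 1, θ => by
      have h4 : Real.sin (θ*4) = 2*(2*Real.sin θ*Real.cos θ)*(2*Real.cos θ^2-1) := by
        rw [show θ*4 = 2*(2*θ) by ring, Real.sin_two_mul, Real.sin_two_mul, Real.cos_two_mul]
      simp [Pf, Finset.sum_range_succ]
      rw [show (2*(1+1)*θ:ℝ) = θ*4 by ring, h4]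
      ring
  | (m+2), θ => by
      have h1 := keyP (m+1) θ
      have h0 := keyP m θ
      rw [sumRec, h1, h0]
      have htrig : Real.sin (2*(↑(m+2)+1)*θ)
          = 2 * Real.cos (2*θ) * Real.sin (2*(↑(m+1)+1)*θ) - Real.sin (2*(↑m+1)*θ) := by
        have e1 : (2*(↑(m+2)+1):ℝ)*θ = 2*(↑(m+1)+1)*θ + 2*θ := by push_cast; ring
        have e2 : (2*(↑m+1):ℝ)*θ = 2*(↑(m+1)+1)*θ - 2*θ := by push_cast; ring
        rw [e1, e2, Real.sin_add, Real.sin_sub]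
        ring
      rw [htrig]
      push_cast
      ring

theorem stmt_2 (m n : ℕ) (hn : 1 ≤ n) (hdvd : n ∣ 2 * (m + 1)) (a : ℝ) :
    ∑ j ∈ Finset.range (m + 1), (-4 : ℝ) ^ j * (Nat.choose (m + j + 1) (2 * j + 1)) *
      ∑ k ∈ Finset.range n, Real.sin (a + 2 * k * π / n) * Real.cos (a + 2 * k * π / n) ^ (2 * j + 1)
    = (-1 : ℝ) ^ m * (n / 2) * Real.sin (2 * (m + 1) * a) := by
  have keyP2 : ∀ (m : ℕ) (θ : ℝ), (∑ j ∈ Finset.range (m+1),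
      (-4:ℝ)^j * ((m+j+1).choose (2*j+1)) * (Real.sin θ * Real.cos θ^(2*j+1)))
      = (-1:ℝ)^m * Real.sin (2*(m+1)*θ) / 2 := by
    intro m' θ
    have h := keyP m' θ
    unfold Pf at h
    exact h
  simp_rw [Finset.mul_sum]
  rw [Finset.sum_comm]
  have hn0 : (n:ℝ) ≠ 0 := by positivity
  obtain ⟨t, ht⟩ := hdvd
  have step : ∀ k ∈ Finset.range n,
      (∑ j ∈ Finset.range (m+1), (-4:ℝ)^j * ((m+j+1).choose (2*j+1)) *
        (Real.sin (a + 2*k*π/n) * Real.cos (a + 2*k*π/n)^(2*j+1)))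
      = (-1:ℝ)^m * Real.sin (2*(m+1)*a) / 2 := by
    intro k _
    rw [keyP2 m (a + 2*k*π/n)]
    congr 2
    have e : 2*((m:ℝ)+1)*(a + 2*k*π/n) = 2*((m:ℝ)+1)*a + (↑(k*t) : ℤ)*(2*π) := by
      have hc : (2*((m:ℝ)+1)) = n * t := by
        have := congrArg (Nat.cast : ℕ → ℝ) ht
        push_cast at this
        linarith
      push_cast
      field_simp
      linear_combination ((k:ℝ)*π) * hc
    rw [e, Real.sin_add_int_mul_two_pi]
  rw [Finset.sum_congr rfl step, Finset.sum_const, Finset.card_range]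
  ring
end

section
/- For integers m ≥ 0 and n ≥ 1 with n not dividing 2(m+1), and any real number a, we have ∑_{j=0}^m (-4)^j * C(m+j+1, 2j+1) * ∑_{k=0}^{n-1} sin(a + 2kπ/n) * cos(a + 2kπ/n)^{2j+1} = 0. -/
open Real Finset

lemma sinsum (n d : ℕ) (hn : 1 ≤ n) (h : ¬ n ∣ d) (b : ℝ) :
    ∑ k ∈ range n, Real.sin (b + k * (2 * π * d / n)) = 0 := by
  have hn0 : (n : ℝ) ≠ 0 := Nat.cast_ne_zero.mpr (by omega)
  set θ : ℝ := 2 * π * d / n with hθ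
  have key : ∑ k ∈ range n, Complex.exp ((b + k * θ : ℝ) * Complex.I) = 0 := by
    have hz1 : Complex.exp ((θ : ℝ) * Complex.I) ≠ 1 := by
      rw [Ne, Complex.exp_eq_one_iff]
      rintro ⟨j, hj⟩
      have hj2 : (θ:ℂ) * Complex.I = ((j:ℂ)*(2*π)) * Complex.I := by rw [hj]; ring
      have hj' := mul_right_cancel₀ Complex.I_ne_zero hj2
      have hjr : θ = (j : ℝ) * (2 * π) := by exact_mod_cast hj'
      have hd : (d : ℝ) = j * n := by
        rw [hθ] at hjr
        field_simp at hjr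
        have hπ := Real.pi_pos
        nlinarith [hjr]
      have hdz : (d : ℤ) = j * n := by exact_mod_cast hd
      exact h (Int.natCast_dvd_natCast.mp ⟨j, by rw [hdz]; ring⟩)
    have hzn : Complex.exp ((θ : ℝ) * Complex.I) ^ n = 1 := by
      rw [← Complex.exp_nat_mul, Complex.exp_eq_one_iff]
      refine ⟨d, ?_⟩
      have hn0' : (n : ℂ) ≠ 0 := Nat.cast_ne_zero.mpr (by omega)
      push_cast [hθ]
      field_simp
    calc ∑ k ∈ range n, Complex.exp ((b + k * θ : ℝ) * Complex.I)
        = Complex.exp (b * Complex.I) * ∑ k ∈ range n, Complex.exp ((θ:ℝ) * Complex.I) ^ k := by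
          rw [Finset.mul_sum]
          refine Finset.sum_congr rfl fun k _ => ?_
          rw [← Complex.exp_nat_mul, ← Complex.exp_add]
          push_cast
          ring_nf
      _ = 0 := by rw [geom_sum_eq hz1, hzn]; simp
  have h2 := congrArg Complex.im key
  rw [Complex.im_sum] at h2
  rw [show (0:ℝ) = Complex.im 0 by simp, ← h2]
  refine Finset.sum_congr rfl fun k _ => ?_
  rw [← Complex.exp_ofReal_mul_I_im]


lemma sumB (m : ℕ) (s c : ℝ) :
    ∑ j ∈ range (m+2), (-4:ℝ)^j * (Nat.choose (m+1+j) (2*j)) * (s * c^(2*j))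
    = ∑ j ∈ range (m+1), (-4:ℝ)^j * (Nat.choose (m+j) (2*j)) * (s * c^(2*j))
      - 4*c*∑ j ∈ range (m+1), (-4:ℝ)^j * (Nat.choose (m+j+1) (2*j+1)) * (s * c^(2*j+1)) := by
  rw [Finset.sum_range_succ' (fun j => (-4:ℝ)^j * (Nat.choose (m+1+j) (2*j)) * (s * c^(2*j))) (m+1)]
  have split : ∀ j ∈ range (m+1),
      (-4:ℝ)^(j+1) * (Nat.choose (m+1+(j+1)) (2*(j+1))) * (s * c^(2*(j+1)))
      = (-4:ℝ)^(j+1) * (Nat.choose (m+(j+1)) (2*(j+1))) * (s * c^(2*(j+1)))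
        + (-4)*((-4:ℝ)^j * (Nat.choose (m+j+1) (2*j+1)) * (c * (s * c^(2*j+1)))) := by
    intro j _
    have hpas : Nat.choose (m+j+1+1) (2*j+1+1) = Nat.choose (m+j+1) (2*j+1) + Nat.choose (m+j+1) (2*j+1+1) := Nat.choose_succ_succ _ _
    have h1 : m+1+(j+1) = m+j+1+1 := by ring
    have h2 : 2*(j+1) = 2*j+1+1 := by ring
    rw [h1, h2, hpas]
    push_cast
    ring
  rw [Finset.sum_congr rfl split, Finset.sum_add_distrib]
  have hB : ∑ j ∈ range (m+1), (-4:ℝ)^(j+1) * (Nat.choose (m+(j+1)) (2*(j+1))) * (s * c^(2*(j+1)))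
      = ∑ j ∈ range (m+1), (-4:ℝ)^j * (Nat.choose (m+j) (2*j)) * (s * c^(2*j))
        - (-4:ℝ)^0 * (Nat.choose (m+0) (2*0)) * (s * c^(2*0)) := by
    have := Finset.sum_range_succ' (fun j => (-4:ℝ)^j * (Nat.choose (m+j) (2*j)) * (s * c^(2*j))) (m+1)
    have hz : ((-4:ℝ)^(m+1) * (Nat.choose (m+(m+1)) (2*(m+1))) * (s * c^(2*(m+1)))) = 0 := by
      rw [Nat.choose_eq_zero_of_lt (by omega)]; simp
    rw [Finset.sum_range_succ, hz, add_zero] at this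
    linarith [this]
  rw [hB]
  have hc : ∑ j ∈ range (m+1), (-4:ℝ)*((-4:ℝ)^j * (Nat.choose (m+j+1) (2*j+1)) * (c * (s * c^(2*j+1))))
       = (-4)*(c * ∑ j ∈ range (m+1), (-4:ℝ)^j * (Nat.choose (m+j+1) (2*j+1)) * (s * c^(2*j+1))) := by
    rw [Finset.mul_sum, Finset.mul_sum]
    exact Finset.sum_congr rfl fun j _ => by ring
  rw [hc]
  simp only [Nat.choose_zero_right, pow_zero, Nat.cast_one, mul_one, one_mul, mul_zero]
  ring

lemma sumA (m : ℕ) (s c : ℝ) :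
    ∑ j ∈ range (m+2), (-4:ℝ)^j * (Nat.choose (m+j+2) (2*j+1)) * (s * c^(2*j+1))
    = c * ∑ j ∈ range (m+2), (-4:ℝ)^j * (Nat.choose (m+1+j) (2*j)) * (s * c^(2*j))
      + ∑ j ∈ range (m+1), (-4:ℝ)^j * (Nat.choose (m+j+1) (2*j+1)) * (s * c^(2*j+1)) := by
  have split : ∀ j ∈ range (m+2),
      (-4:ℝ)^j * (Nat.choose (m+j+2) (2*j+1)) * (s * c^(2*j+1))
      = c * ((-4:ℝ)^j * (Nat.choose (m+1+j) (2*j)) * (s * c^(2*j)))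
        + (-4:ℝ)^j * (Nat.choose (m+j+1) (2*j+1)) * (s * c^(2*j+1)) := by
    intro j _
    have hpas : Nat.choose (m+j+1+1) (2*j+1) = Nat.choose (m+j+1) (2*j) + Nat.choose (m+j+1) (2*j+1) := Nat.choose_succ_succ _ _
    have h1 : m+j+2 = m+j+1+1 := by ring
    have h2 : m+1+j = m+j+1 := by ring
    rw [h1, hpas, h2]
    push_cast
    ring
  rw [Finset.sum_congr rfl split, Finset.sum_add_distrib, ← Finset.mul_sum]
  congr 1
  rw [Finset.sum_range_succ, Nat.choose_eq_zero_of_lt (by omega)]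
  simp

lemma key : ∀ (m : ℕ) (x : ℝ),
    (∑ j ∈ range (m+1), (-4:ℝ)^j * (Nat.choose (m+j+1) (2*j+1)) * (Real.sin x * Real.cos x^(2*j+1))
       = (-1)^m * Real.sin ((2*(m:ℝ)+2)*x) / 2)
    ∧ (∑ j ∈ range (m+1), (-4:ℝ)^j * (Nat.choose (m+j) (2*j)) * (Real.sin x * Real.cos x^(2*j))
       = (-1)^m * Real.sin ((2*(m:ℝ)+1)*x)) := by
  intro m
  induction m with
  | zero =>
    intro x
    constructor
    · simp [Finset.sum_range_one, Real.sin_two_mul]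
      ring
    · simp [Finset.sum_range_one]
  | succ m ih =>
    intro x
    obtain ⟨hA, hB⟩ := ih x
    have hBnew : ∑ j ∈ range (m+2), (-4:ℝ)^j * (Nat.choose (m+1+j) (2*j)) * (Real.sin x * Real.cos x^(2*j))
        = (-1)^(m+1) * Real.sin ((2*(m:ℝ)+3)*x) := by
      rw [sumB, hA, hB]
      have e1 : (2*(m:ℝ)+1)*x = (2*(m:ℝ)+2)*x - x := by ring
      have e3 : (2*(m:ℝ)+3)*x = (2*(m:ℝ)+2)*x + x := by ring
      rw [e1, e3, Real.sin_sub, Real.sin_add, pow_succ]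
      ring
    constructor
    · have h2 : ∀ j : ℕ, m+1+j+1 = m+j+2 := by omega
      simp only [h2, show m+1+1 = m+2 from rfl]
      rw [sumA, hBnew, hA]
      have e2 : (2*(m:ℝ)+2)*x = (2*(m:ℝ)+3)*x - x := by ring
      have e4 : (2*(↑(m+1):ℝ)+2)*x = (2*(m:ℝ)+3)*x + x := by push_cast; ring
      rw [e2, e4, Real.sin_sub, Real.sin_add, pow_succ]
      ring
    · simp only [show m+1+1 = m+2 from rfl]
      rw [hBnew]
      have : (2*(↑(m+1):ℝ)+1)*x = (2*(m:ℝ)+3)*x := by push_cast; ring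
      rw [this]

theorem stmt_3 (m n : ℕ) (hn : 1 ≤ n) (hdvd : ¬ n ∣ 2 * (m + 1)) (a : ℝ) :
    ∑ j ∈ Finset.range (m + 1), (-4 : ℝ) ^ j * (Nat.choose (m + j + 1) (2 * j + 1)) *
      ∑ k ∈ Finset.range n, Real.sin (a + 2 * k * π / n) * Real.cos (a + 2 * k * π / n) ^ (2 * j + 1)
    = 0 := by
  have h1 : ∀ j ∈ range (m+1), (-4 : ℝ) ^ j * (Nat.choose (m + j + 1) (2 * j + 1)) *
      ∑ k ∈ Finset.range n, Real.sin (a + 2 * k * π / n) * Real.cos (a + 2 * k * π / n) ^ (2 * j + 1)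
      = ∑ k ∈ Finset.range n, (-4 : ℝ) ^ j * (Nat.choose (m + j + 1) (2 * j + 1)) *
        (Real.sin (a + 2 * k * π / n) * Real.cos (a + 2 * k * π / n) ^ (2 * j + 1)) := by
    intro j _
    rw [Finset.mul_sum]
  rw [Finset.sum_congr rfl h1, Finset.sum_comm]
  have h2 : ∀ k ∈ range n, ∑ j ∈ range (m+1), (-4 : ℝ) ^ j * (Nat.choose (m + j + 1) (2 * j + 1)) *
      (Real.sin (a + 2 * k * π / n) * Real.cos (a + 2 * k * π / n) ^ (2 * j + 1))
      = (-1:ℝ)^m * Real.sin ((2*(m:ℝ)+2)*(a + 2 * k * π / n)) / 2 := by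
    intro k _
    exact (key m (a + 2 * k * π / n)).1
  rw [Finset.sum_congr rfl h2]
  have h3 := sinsum n (2*m+2) hn (by rwa [show 2*(m+1) = 2*m+2 by ring] at hdvd) (((2*m+2:ℕ):ℝ)*a)
  have h4 : ∀ k ∈ range n, (-1:ℝ)^m * Real.sin ((2*(m:ℝ)+2)*(a + 2 * k * π / n)) / 2
      = ((-1:ℝ)^m/2) * Real.sin (((2*m+2:ℕ):ℝ)*a + k*(2*π*((2*m+2:ℕ):ℝ)/n)) := by
    intro k _
    have harg : (2*(m:ℝ)+2)*(a + 2 * k * π / n) = ((2*m+2:ℕ):ℝ)*a + k*(2*π*((2*m+2:ℕ):ℝ)/n) := by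
      push_cast
      ring
    rw [harg]
    ring
  rw [Finset.sum_congr rfl h4, ← Finset.mul_sum, h3, mul_zero]
end

section
/- For any integer n ≥ 1, real number a, and real x with x^n ≠ cos(na) ± i·sin(na) in the sense that 1 + x^{2n} - 2x^n cos(na) ≠ 0, and with 1 + x^2 - 2x cos(a + 2kπ/n) ≠ 0 for all k, one has ∑_{k=0}^{n-1} sin(a + 2kπ/n) / (1 + x^2 - 2x cos(a + 2kπ/n)) = n x^{n-1} sin(na) / (1 + x^{2n} - 2 x^n cos(na)). -/
open Real Finset

theorem myderiv_prod {ι R : Type*} [DecidableEq ι] [CommRing R] (s : Finset ι)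
    (f : ι → Polynomial R) :
    Polynomial.derivative (∏ i ∈ s, f i)
      = ∑ i ∈ s, (∏ j ∈ s.erase i, f j) * Polynomial.derivative (f i) := by
  classical
  induction s using Finset.induction_on with
  | empty => simp
  | insert a s ha ih =>
    rw [Finset.prod_insert ha, Polynomial.derivative_mul, Finset.sum_insert ha,
      Finset.erase_insert ha, ih, Finset.mul_sum]
    congr 1
    · rw [mul_comm]
    · refine Finset.sum_congr rfl fun i hi => ?_
      rw [Finset.erase_insert_of_ne (by rintro rfl; exact ha hi),
        Finset.prod_insert (fun h => ha (Finset.mem_of_mem_erase h)), mul_assoc]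

theorem mysum_prod (n : ℕ) (w : ℕ → ℂ) (c : ℂ)
    (hQs : ∀ y : ℂ, ∏ i ∈ Finset.range n, (1 - y * w i) = 1 - c * y ^ n) (x : ℂ) :
    ∑ k ∈ Finset.range n, (∏ j ∈ (Finset.range n).erase k, (1 - x * w j)) * w k
      = c * (n * x ^ (n - 1)) := by
  open Polynomial in
  have hQ : (∏ i ∈ Finset.range n, (1 - C (w i) * X) : ℂ[X]) = 1 - C c * X ^ n := by
    apply Polynomial.funext
    intro y
    have := hQs y
    rw [Polynomial.eval_prod]
    simp only [Polynomial.eval_sub, Polynomial.eval_one, Polynomial.eval_mul, Polynomial.eval_C,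
      Polynomial.eval_X, Polynomial.eval_pow]
    rw [← this]
    exact Finset.prod_congr rfl fun i _ => by ring
  open Polynomial in
  have hD := congrArg derivative hQ
  rw [myderiv_prod] at hD
  have hD2 : ∀ k, Polynomial.derivative (1 - Polynomial.C (w k) * Polynomial.X : Polynomial ℂ)
      = - Polynomial.C (w k) := by intro k; simp
  simp only [hD2] at hD
  rw [Polynomial.derivative_sub, Polynomial.derivative_one, Polynomial.derivative_C_mul,
    Polynomial.derivative_X_pow] at hD
  have h3 := congrArg (Polynomial.eval x) hD
  simp only [Polynomial.eval_sub, Polynomial.eval_mul, Polynomial.eval_neg, Polynomial.eval_C,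
    Polynomial.eval_finset_sum, Polynomial.eval_prod, Polynomial.eval_one, Polynomial.eval_pow,
    Polynomial.eval_X, zero_sub, Polynomial.eval_natCast] at h3
  have h4 : ∑ k ∈ Finset.range n, -((∏ j ∈ (Finset.range n).erase k, (1 - x * w j)) * w k)
      = -(c * (↑n * x ^ (n - 1))) := by
    rw [← h3]
    refine Finset.sum_congr rfl fun k _ => ?_
    have he : ∏ j ∈ (Finset.range n).erase k, (1 - x * w j)
        = ∏ j ∈ (Finset.range n).erase k, (1 - w j * x) :=
      Finset.prod_congr rfl fun j _ => by ring
    rw [he]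
    ring
  rw [Finset.sum_neg_distrib] at h4
  exact neg_injective h4

theorem stmt_4 (n : ℕ) (hn : 1 ≤ n) (a x : ℝ)
    (h1 : 1 + x ^ (2 * n) - 2 * x ^ n * Real.cos (n * a) ≠ 0)
    (h2 : ∀ k ∈ Finset.range n, 1 + x ^ 2 - 2 * x * Real.cos (a + 2 * k * π / n) ≠ 0) :
    ∑ k ∈ Finset.range n, Real.sin (a + 2 * k * π / n) /
        (1 + x ^ 2 - 2 * x * Real.cos (a + 2 * k * π / n))
    = n * x ^ (n - 1) * Real.sin (n * a) / (1 + x ^ (2 * n) - 2 * x ^ n * Real.cos (n * a)) := by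
  classical
  have hn0 : n ≠ 0 := by omega
  have hncast : (n : ℂ) ≠ 0 := Nat.cast_ne_zero.mpr hn0
  set ζ : ℂ := Complex.exp (2 * ↑π * Complex.I / n) with hζdef
  have hζ : IsPrimitiveRoot ζ n := Complex.isPrimitiveRoot_exp n hn0
  set α : ℂ := Complex.exp (a * Complex.I) with hαdef
  set w : ℕ → ℂ := fun k => ζ ^ k * α with hwdef
  set θ : ℕ → ℝ := fun k => a + 2 * k * π / n with hθdef
  have hw : ∀ k : ℕ, w k = Complex.exp (↑(θ k) * Complex.I) := by
    intro k
    rw [hwdef]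
    simp only
    rw [hζdef, hαdef, ← Complex.exp_nat_mul, ← Complex.exp_add]
    congr 1
    rw [hθdef]
    push_cast
    field_simp
    ring
  have hwre : ∀ k, (w k).re = Real.cos (θ k) := fun k => by
    rw [hw k, Complex.exp_ofReal_mul_I_re]
  have hwim : ∀ k, (w k).im = Real.sin (θ k) := fun k => by
    rw [hw k, Complex.exp_ofReal_mul_I_im]
  have hα : α ^ n = Complex.exp (↑((n : ℝ) * a) * Complex.I) := by
    rw [hαdef, ← Complex.exp_nat_mul]
    congr 1
    push_cast
    ring
  have hαre : (α ^ n).re = Real.cos (n * a) := by rw [hα, Complex.exp_ofReal_mul_I_re]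
  have hαim : (α ^ n).im = Real.sin (n * a) := by rw [hα, Complex.exp_ofReal_mul_I_im]
  -- polynomial / product identities
  have hP : (Polynomial.X ^ n - Polynomial.C (α ^ n) : Polynomial ℂ)
      = ∏ i ∈ Finset.range n, (Polynomial.X - Polynomial.C (w i)) :=
    X_pow_sub_C_eq_prod hζ (by omega) rfl
  have hPs : ∀ y : ℂ, ∏ i ∈ Finset.range n, (y - w i) = y ^ n - α ^ n := by
    intro y
    have := congrArg (Polynomial.eval y) hP
    simpa [Polynomial.eval_prod] using this.symm
  have hQs : ∀ y : ℂ, ∏ i ∈ Finset.range n, (1 - y * w i) = 1 - α ^ n * y ^ n := by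
    intro y
    rcases eq_or_ne y 0 with rfl | hy
    · simp [zero_pow hn0]
    · have he : ∀ i, 1 - y * w i = y * (y⁻¹ - w i) := by intro i; field_simp
      rw [Finset.prod_congr rfl fun i _ => he i, Finset.prod_mul_distrib,
        Finset.prod_const, Finset.card_range, hPs]
      rw [mul_sub, ← mul_pow, mul_inv_cancel₀ hy, one_pow]
      ring
  -- nonvanishing of denominators
  have hnsq : ∀ k ∈ Finset.range n,
      Complex.normSq (1 - ↑x * w k) = 1 + x ^ 2 - 2 * x * Real.cos (θ k) := by
    intro k _
    have hpyth := Real.sin_sq_add_cos_sq (θ k)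
    rw [Complex.normSq_apply]
    simp [Complex.sub_re, Complex.sub_im, Complex.mul_re, Complex.mul_im, hwre, hwim]
    nlinarith [hpyth]
  have hdk : ∀ k ∈ Finset.range n, (1 - ↑x * w k : ℂ) ≠ 0 := by
    intro k hk h0
    apply h2 k hk
    rw [← hnsq k hk, h0, map_zero]
  have hnsqc : Complex.normSq (1 - α ^ n * ↑x ^ n)
      = 1 + x ^ (2 * n) - 2 * x ^ n * Real.cos (n * a) := by
    have hpyth := Real.sin_sq_add_cos_sq ((n : ℝ) * a)
    rw [Complex.normSq_apply]
    have hx2n : x ^ (2 * n) = (x ^ n) ^ 2 := by rw [← pow_mul]; ring_nf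
    simp [Complex.sub_re, Complex.sub_im, Complex.mul_re, Complex.mul_im, hαre, hαim, hx2n,
      ← Complex.ofReal_pow]
    nlinarith [hpyth]
  have hdc : (1 - α ^ n * ↑x ^ n : ℂ) ≠ 0 := by
    intro h0
    apply h1
    rw [← hnsqc, h0, map_zero]
  -- the complex sum identity
  have hB := mysum_prod n w (α ^ n) hQs ↑x
  have hS : ∑ k ∈ Finset.range n, w k / (1 - ↑x * w k)
      = α ^ n * (↑n * ↑x ^ (n - 1)) / (1 - α ^ n * ↑x ^ n) := by
    rw [eq_div_iff hdc, Finset.sum_mul, ← hB]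
    refine Finset.sum_congr rfl fun k hk => ?_
    rw [← hQs, ← Finset.prod_erase_mul _ _ hk, mul_comm (∏ j ∈ (Finset.range n).erase k,
      (1 - ↑x * w j)) (1 - ↑x * w k), ← mul_assoc, div_mul_cancel₀ _ (hdk k hk), mul_comm]
  -- take imaginary parts
  have hIm := congrArg Complex.im hS
  rw [Complex.im_sum] at hIm
  calc ∑ k ∈ Finset.range n, Real.sin (θ k) / (1 + x ^ 2 - 2 * x * Real.cos (θ k))
      = ∑ k ∈ Finset.range n, (w k / (1 - ↑x * w k)).im := by
        refine Finset.sum_congr rfl fun k hk => ?_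
        rw [Complex.div_im, hnsq k hk, div_sub_div_same]
        congr 1
        simp [Complex.sub_re, Complex.sub_im, Complex.mul_re, Complex.mul_im, hwre, hwim]
        ring
    _ = (α ^ n * (↑n * ↑x ^ (n - 1)) / (1 - α ^ n * ↑x ^ n)).im := hIm
    _ = n * x ^ (n - 1) * Real.sin (n * a) / (1 + x ^ (2 * n) - 2 * x ^ n * Real.cos (n * a)) := by
        rw [Complex.div_im, hnsqc, div_sub_div_same]
        congr 1
        simp [Complex.sub_re, Complex.sub_im, Complex.mul_re, Complex.mul_im, hαre, hαim,
          ← Complex.ofReal_pow]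
        ring
end

section
/- For integers m ≥ 0 and n ≥ 1 with n dividing 2m+1, we have ∑_{j=0}^m ((-4)^j / (2j+1)) * C(m+j, 2j) * ∑_{k=0}^{n-1} ( sin(2kπ/n)^{2j+1} + cos(2kπ/n)^{2j+1} ) = (-1)^m * n / (2m+1). -/
open Real Finset

noncomputable def sD (m : ℕ) (x : ℝ) : ℝ :=
  ∑ j ∈ Finset.range (m + 1), (-4 : ℝ) ^ j * (Nat.choose (m + j) (2 * j)) * x ^ (2 * j)

noncomputable def sE (m : ℕ) (x : ℝ) : ℝ :=
  ∑ j ∈ Finset.range (m + 1),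
    (-4 : ℝ) ^ j * ((Nat.choose (m + j) (2 * j) : ℝ) + 2 * Nat.choose (m + j) (2 * j + 1)) * x ^ (2 * j)

lemma sD_pad (m : ℕ) (x : ℝ) :
    sD m x = ∑ j ∈ Finset.range (m + 2),
      (-4 : ℝ) ^ j * (Nat.choose (m + j) (2 * j)) * x ^ (2 * j) := by
  rw [Finset.sum_range_succ]
  have h1 : Nat.choose (m + (m+1)) (2 * (m+1)) = 0 :=
    Nat.choose_eq_zero_of_lt (by omega)
  simp [sD, h1]

lemma combined (m : ℕ) (x : ℝ) :
    2*x^2*(sD m x + sE m x) = ∑ j ∈ Finset.range (m + 1),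
      2*x^2*((-4 : ℝ) ^ j * (2*(Nat.choose (m + j) (2 * j) : ℝ)
        + 2 * Nat.choose (m + j) (2 * j + 1)) * x ^ (2 * j)) := by
  unfold sD sE
  rw [← Finset.sum_add_distrib, Finset.mul_sum]
  exact Finset.sum_congr rfl (fun j _ => by push_cast; ring)

lemma sE_pad (m : ℕ) (x : ℝ) :
    sE m x + 2 * sD m x = ∑ j ∈ Finset.range (m + 2),
      (-4 : ℝ) ^ j * (3 * (Nat.choose (m + j) (2 * j) : ℝ) + 2 * Nat.choose (m + j) (2 * j + 1)) * x ^ (2 * j) := by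
  rw [Finset.sum_range_succ]
  have h1 : Nat.choose (m + (m+1)) (2 * (m+1)) = 0 :=
    Nat.choose_eq_zero_of_lt (by omega)
  have h2 : Nat.choose (m + (m+1)) (2 * (m+1) + 1) = 0 :=
    Nat.choose_eq_zero_of_lt (by omega)
  rw [h1, h2]
  simp only [Nat.cast_zero]
  rw [show (-4:ℝ)^(m+1) * (3*(0:ℝ) + 2*0) * x^(2*(m+1)) = 0 by ring, add_zero]
  unfold sD sE
  rw [Finset.mul_sum, ← Finset.sum_add_distrib]
  exact Finset.sum_congr rfl (fun j _ => by push_cast; ring)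

lemma recD (m : ℕ) (x : ℝ) :
    sD (m+1) x = sD m x - 2*x^2 * (sD m x + sE m x) := by
  rw [combined, sD_pad m x]
  simp only [sD]
  rw [Finset.sum_range_succ' (fun j => (-4:ℝ)^j * (Nat.choose (m+1+j) (2*j)) * x^(2*j)) (m+1),
    Finset.sum_range_succ' (fun j => (-4:ℝ)^j * (Nat.choose (m+j) (2*j)) * x^(2*j)) (m+1),
    add_sub_right_comm, ← Finset.sum_sub_distrib]
  congr 1
  · apply Finset.sum_congr rfl
    intro j _
    have e1 : Nat.choose (m+1+(j+1)) (2*(j+1)) =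
        Nat.choose (m+j+1) (2*j+1) + Nat.choose (m+j+1) (2*j+2) := by
      rw [show m+1+(j+1) = (m+j+1)+1 by ring, show 2*(j+1) = (2*j+1)+1 by ring]
      exact Nat.choose_succ_succ _ _
    have e2 : Nat.choose (m+j+1) (2*j+1) =
        Nat.choose (m+j) (2*j) + Nat.choose (m+j) (2*j+1) := Nat.choose_succ_succ _ _
    have e3 : m+(j+1) = m+j+1 := by ring
    have e4 : 2*(j+1) = 2*j+2 := by ring
    rw [e1, e2, e3, e4]
    push_cast
    ring
  · simp

lemma recE (m : ℕ) (x : ℝ) :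
    sE (m+1) x = (sE m x + 2 * sD m x) - 2*x^2 * (sD m x + sE m x) := by
  rw [combined, sE_pad m x]
  simp only [sE]
  rw [Finset.sum_range_succ' (fun j => (-4:ℝ)^j * ((Nat.choose (m+1+j) (2*j) : ℝ)
      + 2 * Nat.choose (m+1+j) (2*j+1)) * x^(2*j)) (m+1),
    Finset.sum_range_succ' (fun j => (-4:ℝ)^j * (3*(Nat.choose (m+j) (2*j):ℝ)
      + 2 * Nat.choose (m+j) (2*j+1)) * x^(2*j)) (m+1),
    add_sub_right_comm, ← Finset.sum_sub_distrib]
  congr 1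
  · apply Finset.sum_congr rfl
    intro j _
    have e1 : Nat.choose (m+1+(j+1)) (2*(j+1)) =
        Nat.choose (m+j+1) (2*j+1) + Nat.choose (m+j+1) (2*j+2) := by
      rw [show m+1+(j+1) = (m+j+1)+1 by ring, show 2*(j+1) = (2*j+1)+1 by ring]
      exact Nat.choose_succ_succ _ _
    have e1' : Nat.choose (m+1+(j+1)) (2*(j+1)+1) =
        Nat.choose (m+j+1) (2*j+2) + Nat.choose (m+j+1) (2*j+3) := by
      rw [show m+1+(j+1) = (m+j+1)+1 by ring, show 2*(j+1)+1 = (2*j+2)+1 by ring]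
      exact Nat.choose_succ_succ _ _
    have e2 : Nat.choose (m+j+1) (2*j+1) =
        Nat.choose (m+j) (2*j) + Nat.choose (m+j) (2*j+1) := Nat.choose_succ_succ _ _
    have e3 : m+(j+1) = m+j+1 := by ring
    have e4 : 2*(j+1) = 2*j+2 := by ring
    have e5 : 2*(j+1)+1 = 2*j+3 := by ring
    rw [e1, e1', e2, e3, e5, e4]
    push_cast
    ring
  · simp [Nat.choose_one_right]
    push_cast
    ring

lemma DE (m : ℕ) (θ : ℝ) :
    cos ((2*(m:ℝ)+1)*θ) = cos θ * sD m (sin θ) ∧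
    sin ((2*(m:ℝ)+1)*θ) = sin θ * sE m (sin θ) := by
  induction m with
  | zero => simp [sD, sE]
  | succ m ih =>
    obtain ⟨hc, hs⟩ := ih
    have hang : (2*((m:ℝ)+1)+1)*θ = (2*(m:ℝ)+1)*θ + 2*θ := by ring
    constructor
    · rw [show ((m+1:ℕ):ℝ) = (m:ℝ)+1 by push_cast; ring, hang, cos_add, hc, hs,
        cos_two_mul, sin_two_mul, cos_sq', recD]
      ring
    · rw [show ((m+1:ℕ):ℝ) = (m:ℝ)+1 by push_cast; ring, hang, sin_add, hc, hs,
        cos_two_mul, sin_two_mul, recE]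
      have hc2 : cos θ ^ 2 = 1 - sin θ ^ 2 := cos_sq' θ
      linear_combination (2*sin θ*(sD m (sin θ) + sE m (sin θ))) * hc2

lemma chooseId (m j : ℕ) (hj : j ≤ m) :
    (2*m+1) * Nat.choose (m+j) (2*j) =
      (2*j+1) * (Nat.choose (m+j) (2*j) + 2 * Nat.choose (m+j) (2*j+1)) := by
  have h := Nat.choose_succ_right_eq (m+j) (2*j)
  have h2 : m+j - 2*j = m - j := by omega
  rw [h2] at h
  have h3 : 2*j+1+2*(m-j) = 2*m+1 := by omega
  calc (2*m+1) * Nat.choose (m+j) (2*j)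
      = (2*j+1+2*(m-j)) * Nat.choose (m+j) (2*j) := by rw [h3]
    _ = (2*j+1) * Nat.choose (m+j) (2*j) + 2*(Nat.choose (m+j) (2*j) * (m-j)) := by ring
    _ = (2*j+1) * Nat.choose (m+j) (2*j) + 2*(Nat.choose (m+j) (2*j+1) * (2*j+1)) := by
        rw [← h]
    _ = (2*j+1) * (Nat.choose (m+j) (2*j) + 2 * Nat.choose (m+j) (2*j+1)) := by ring

lemma Psin (m : ℕ) (θ : ℝ) :
    ∑ j ∈ Finset.range (m+1), ((-4:ℝ)^j/(2*j+1)) * (Nat.choose (m+j) (2*j)) * sin θ ^ (2*j+1)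
      = sin ((2*(m:ℝ)+1)*θ) / (2*(m:ℝ)+1) := by
  rw [(DE m θ).2, sE, eq_div_iff (by positivity), Finset.sum_mul, Finset.mul_sum]
  apply Finset.sum_congr rfl
  intro j hj
  have hjm : j ≤ m := by simpa using Nat.lt_succ_iff.mp (Finset.mem_range.mp hj)
  have hcast : (2*(m:ℝ)+1) * (Nat.choose (m+j) (2*j) : ℝ) =
      (2*(j:ℝ)+1) * ((Nat.choose (m+j) (2*j) : ℝ) + 2 * Nat.choose (m+j) (2*j+1)) := by
    exact_mod_cast congrArg (fun t : ℕ => (t : ℝ)) (chooseId m j hjm)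
  have h2j : (2*(j:ℝ)+1) ≠ 0 := by positivity
  have hpow : sin θ ^ (2*j+1) = sin θ ^ (2*j) * sin θ := pow_succ _ _
  rw [div_mul_eq_mul_div, div_mul_eq_mul_div, div_mul_eq_mul_div, div_eq_iff h2j]
  linear_combination ((-4:ℝ)^j * sin θ ^ (2*j+1)) * hcast +
    ((-4:ℝ)^j * (2*(j:ℝ)+1) * ((Nat.choose (m+j) (2*j) : ℝ) + 2 * Nat.choose (m+j) (2*j+1))) * hpow

theorem stmt_5 (m n : ℕ) (hn : 1 ≤ n) (hdvd : n ∣ 2 * m + 1) :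
    ∑ j ∈ Finset.range (m + 1), ((-4 : ℝ) ^ j / (2 * j + 1)) * (Nat.choose (m + j) (2 * j)) *
      ∑ k ∈ Finset.range n,
        (Real.sin (2 * k * π / n) ^ (2 * j + 1) + Real.cos (2 * k * π / n) ^ (2 * j + 1))
    = (-1 : ℝ) ^ m * n / (2 * m + 1) := by
  obtain ⟨q, hq⟩ := hdvd
  have hn0 : (n:ℝ) ≠ 0 := by positivity
  simp_rw [Finset.mul_sum]
  rw [Finset.sum_comm]
  have key : ∀ k ∈ Finset.range n,
      ∑ j ∈ Finset.range (m+1), ((-4:ℝ)^j/(2*j+1)) * (Nat.choose (m+j) (2*j)) *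
        (Real.sin (2*k*π/n) ^ (2*j+1) + Real.cos (2*k*π/n) ^ (2*j+1))
      = (-1:ℝ)^m / (2*(m:ℝ)+1) := by
    intro k _
    set A : ℝ := 2*k*π/n with hA
    have split : ∀ j ∈ Finset.range (m+1),
        ((-4:ℝ)^j/(2*j+1)) * (Nat.choose (m+j) (2*j)) * (sin A ^ (2*j+1) + cos A ^ (2*j+1))
        = ((-4:ℝ)^j/(2*j+1)) * (Nat.choose (m+j) (2*j)) * sin A ^ (2*j+1)
          + ((-4:ℝ)^j/(2*j+1)) * (Nat.choose (m+j) (2*j)) * sin (π/2 - A) ^ (2*j+1) := by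
      intro j _
      rw [Real.sin_pi_div_two_sub]
      ring
    rw [Finset.sum_congr rfl split, Finset.sum_add_distrib, Psin, Psin]
    have hnq : (2*(m:ℝ)+1) = (n:ℝ) * q := by exact_mod_cast hq
    have hmul : (2*(m:ℝ)+1) * A = (2*(q*k) : ℕ) * π := by
      rw [hA, hnq]
      push_cast
      field_simp
    have hsin0 : sin ((2*(m:ℝ)+1)*A) = 0 := by rw [hmul]; exact Real.sin_nat_mul_pi _
    have hsin1 : sin ((2*(m:ℝ)+1)*(π/2 - A)) = (-1:ℝ)^m := by
      have expand : (2*(m:ℝ)+1)*(π/2 - A) = (2*(m:ℝ)+1)*(π/2) - (2*(m:ℝ)+1)*A := by ring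
      rw [expand, hmul, Real.sin_sub]
      have c1 : cos (((2*(q*k) : ℕ) : ℝ) * π) = 1 := by
        rw [show ((2*(q*k) : ℕ) : ℝ) * π = ((q*k : ℕ) : ℝ) * (2*π) by push_cast; ring]
        exact Real.cos_nat_mul_two_pi _
      have s1 : sin (((2*(q*k) : ℕ) : ℝ) * π) = 0 := Real.sin_nat_mul_pi _
      rw [c1, s1]
      have half : (2*(m:ℝ)+1)*(π/2) = (m:ℝ)*π + π/2 := by ring
      rw [half, Real.sin_add, Real.sin_pi_div_two, Real.cos_pi_div_two]
      have cm : cos ((m:ℝ)*π) = (-1:ℝ)^m := by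
        have := Real.cos_nat_mul_pi_sub 0 m
        simpa using this
      rw [Real.sin_nat_mul_pi, cm]
      ring
    rw [hsin0, hsin1]
    ring
  rw [Finset.sum_congr rfl key, Finset.sum_const, Finset.card_range, nsmul_eq_mul]
  push_cast
  ring
end

section
/- For integers m ≥ 0 and n ≥ 1 with n not dividing 2m+1, we have ∑_{j=0}^m ((-4)^j / (2j+1)) * C(m+j, 2j) * ∑_{k=0}^{n-1} ( sin(2kπ/n)^{2j+1} + cos(2kπ/n)^{2j+1} ) = 0. -/
open Real Finset

noncomputable def cf (M j : ℕ) : ℝ := (-4 : ℝ) ^ j / (2 * (j:ℝ) + 1) * ((M + j).choose (2 * j))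

lemma cf_eq_zero {M j : ℕ} (h : M < j) : cf M j = 0 := by
  simp [cf, Nat.choose_eq_zero_of_lt (by omega : M + j < 2 * j)]

lemma main_case (i d : ℕ) :
    (2 * ((i:ℝ) + 1 + d) + 5) * cf (i + d + 3) (i + 1) =
      2 * (2 * ((i:ℝ) + 1 + d) + 3) * cf (i + d + 2) (i + 1)
      - (2 * ((i:ℝ) + 1 + d) + 1) * cf (i + 1 + d) (i + 1)
      - 4 * (2 * ((i:ℝ) + 1 + d) + 3) * cf (i + d + 2) i := by
  unfold cf
  rw [Nat.cast_choose ℝ (by omega : 2 * (i+1) ≤ i + d + 3 + (i+1)),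
      Nat.cast_choose ℝ (by omega : 2 * (i+1) ≤ i + d + 2 + (i+1)),
      Nat.cast_choose ℝ (by omega : 2 * (i+1) ≤ i + 1 + d + (i+1)),
      Nat.cast_choose ℝ (by omega : 2 * i ≤ i + d + 2 + i)]
  rw [(by omega : i + d + 3 + (i+1) - 2*(i+1) = d + 2),
      (by omega : i + d + 2 + (i+1) - 2*(i+1) = d + 1),
      (by omega : i + 1 + d + (i+1) - 2*(i+1) = d),
      (by omega : i + d + 2 + i - 2*i = d + 2)]
  rw [(by omega : i + d + 3 + (i+1) = (2*i+d+2) + 1 + 1),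
      (by omega : i + d + 2 + (i+1) = (2*i+d+2) + 1),
      (by omega : i + 1 + d + (i+1) = 2*i+d+2),
      (by omega : i + d + 2 + i = 2*i+d+2),
      (by omega : 2*(i+1) = 2*i + 1 + 1)]
  have hu : (((2*i+d+2).factorial : ℕ) : ℝ) ≠ 0 := by exact_mod_cast (Nat.factorial_pos _).ne'
  have hd : ((d.factorial : ℕ) : ℝ) ≠ 0 := by exact_mod_cast (Nat.factorial_pos _).ne'
  have hi : (((2*i).factorial : ℕ) : ℝ) ≠ 0 := by exact_mod_cast (Nat.factorial_pos _).ne'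
  simp only [Nat.factorial_succ]
  push_cast
  have h1 : (2*(i:ℝ)+1+1+1 : ℝ) ≠ 0 := by positivity
  have h2 : (2*(i:ℝ)+1 : ℝ) ≠ 0 := by positivity
  have h3 : ((i:ℝ)+1 : ℝ) ≠ 0 := by positivity
  field_simp
  ring

lemma coeff_id (m j : ℕ) :
    (2*(m:ℝ)+5) * cf (m+2) j =
      2*(2*(m:ℝ)+3) * cf (m+1) j - (2*(m:ℝ)+1) * cf m j
      - (if j = 0 then 0 else 4*(2*(m:ℝ)+3) * cf (m+1) (j-1)) := by
  rcases j with _ | i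
  · simp [cf]; ring
  · simp only [Nat.succ_ne_zero, if_false, Nat.succ_sub_one]
    rcases lt_trichotomy i m with h | rfl | h
    · obtain ⟨d, rfl⟩ : ∃ d, m = i + 1 + d := ⟨m - (i+1), by omega⟩
      have H := main_case i d
      rw [(by omega : i + 1 + d + 2 = i + d + 3), (by omega : i + 1 + d + 1 = i + d + 2)]
      push_cast at H ⊢
      linear_combination H
    · unfold cf
      rw [(by omega : i + 2 + (i+1) = (2*i+2) + 1), (by omega : 2 * (i+1) = 2*i+2),
          (by omega : i + 1 + (i+1) = 2*i+2), (by omega : i + (i+1) = 2*i+1),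
          (by omega : i + 1 + i = (2*i) + 1), (by omega : 2 * i = 2*i)]
      rw [Nat.choose_succ_self_right, Nat.choose_self, Nat.choose_eq_zero_of_lt (by omega),
          Nat.choose_succ_self_right]
      have h1 : (2*(i:ℝ)+1+1+1 : ℝ) ≠ 0 := by positivity
      have h2 : (2*(i:ℝ)+1 : ℝ) ≠ 0 := by positivity
      push_cast
      rw [pow_succ]
      field_simp
      ring
    · rcases eq_or_lt_of_le (show m + 1 ≤ i by omega) with rfl | h2
      · unfold cf
        rw [(by omega : m + 2 + (m+1+1) = 2*m+4), (by omega : 2 * (m+1+1) = 2*m+4),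
            (by omega : m + 1 + (m+1+1) = 2*m+3), (by omega : m + (m+1+1) = 2*m+2),
            (by omega : m + 1 + (m+1) = 2*m+2), (by omega : 2 * (m+1) = 2*m+2)]
        rw [Nat.choose_self, Nat.choose_eq_zero_of_lt (by omega),
            Nat.choose_eq_zero_of_lt (by omega), Nat.choose_self]
        have h1 : (2*((m:ℝ)+1+1)+1 : ℝ) ≠ 0 := by positivity
        have h2 : (2*((m:ℝ)+1)+1 : ℝ) ≠ 0 := by positivity
        push_cast
        rw [pow_succ, pow_succ]
        field_simp
        ring
      · rw [cf_eq_zero (by omega : m + 2 < i + 1), cf_eq_zero (by omega : m + 1 < i + 1),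
            cf_eq_zero (by omega : m < i + 1), cf_eq_zero (by omega : m + 1 < i)]
        ring

lemma ext_sum (M N : ℕ) (h : M + 1 ≤ N) (s : ℝ) :
    ∑ j ∈ range (M+1), cf M j * s^(2*j+1) = ∑ j ∈ range N, cf M j * s^(2*j+1) := by
  apply Finset.sum_subset (Finset.range_subset_range.2 h)
  intro j _ hj2
  rw [cf_eq_zero (by simp at hj2; omega : M < j)]
  ring

lemma keyrec (m : ℕ) (s : ℝ) :
    (2*(m:ℝ)+5) * ∑ j ∈ range (m+3), cf (m+2) j * s^(2*j+1)
    = 2*(1-2*s^2)*(2*(m:ℝ)+3) * ∑ j ∈ range (m+2), cf (m+1) j * s^(2*j+1)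
      - (2*(m:ℝ)+1) * ∑ j ∈ range (m+1), cf m j * s^(2*j+1) := by
  rw [ext_sum (m+2) (m+5) (by omega), ext_sum (m+1) (m+5) (by omega),
      ext_sum m (m+5) (by omega)]
  set h : ℕ → ℝ := fun j => if j = 0 then 0 else 4*(2*(m:ℝ)+3) * cf (m+1) (j-1) * s^(2*j+1) with hh
  have hshift : ∑ j ∈ range (m+5), 4*(2*(m:ℝ)+3) * cf (m+1) j * s^(2*j+3)
      = ∑ j ∈ range (m+5), h j := by
    have h6 : ∑ j ∈ range (m+5+1), h j = (∑ j ∈ range (m+5), h (j+1)) + h 0 :=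
      Finset.sum_range_succ' h (m+5)
    have h5 : ∑ j ∈ range (m+5+1), h j = (∑ j ∈ range (m+5), h j) + h (m+5) :=
      Finset.sum_range_succ h (m+5)
    have htop : h (m+5) = 0 := by
      simp only [hh]
      rw [if_neg (by omega), (by omega : m + 5 - 1 = m + 4),
          cf_eq_zero (by omega : m + 1 < m + 4)]
      ring
    have h0 : h 0 = 0 := by simp [hh]
    have hterm : ∀ j ∈ range (m+5), 4*(2*(m:ℝ)+3) * cf (m+1) j * s^(2*j+3) = h (j+1) := by
      intro j _
      simp only [hh]
      rw [if_neg (by omega), Nat.add_sub_cancel, (by omega : 2*(j+1)+1 = 2*j+3)]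
    rw [Finset.sum_congr rfl hterm]
    rw [htop] at h5
    rw [h0] at h6
    linarith [h5, h6]
  calc (2*(m:ℝ)+5) * ∑ j ∈ range (m+5), cf (m+2) j * s^(2*j+1)
      = ∑ j ∈ range (m+5),
          ((2*(2*(m:ℝ)+3) * cf (m+1) j - (2*(m:ℝ)+1) * cf m j) * s^(2*j+1) - h j) := by
        rw [Finset.mul_sum]
        apply Finset.sum_congr rfl
        intro j _
        have C := coeff_id m j
        rcases j with _ | i
        · simp only [hh] at C ⊢
          norm_num at C ⊢
          linear_combination C * s
        · simp only [hh, if_neg (Nat.succ_ne_zero i), Nat.succ_sub_one] at C ⊢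
          linear_combination C * s^(2*(i+1)+1)
    _ = 2*(1-2*s^2)*(2*(m:ℝ)+3) * ∑ j ∈ range (m+5), cf (m+1) j * s^(2*j+1)
        - (2*(m:ℝ)+1) * ∑ j ∈ range (m+5), cf m j * s^(2*j+1) := by
        rw [Finset.sum_sub_distrib, ← hshift]
        simp only [Finset.mul_sum, ← Finset.sum_sub_distrib]
        apply Finset.sum_congr rfl
        intro j _
        ring

lemma Fsin : ∀ (m : ℕ) (θ : ℝ),
    (2*(m:ℝ)+1) * ∑ j ∈ range (m+1), cf m j * Real.sin θ ^ (2*j+1)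
      = Real.sin ((2*(m:ℝ)+1)*θ) := by
  intro m
  induction m using Nat.strong_induction_on with
  | _ m ih =>
    match m with
    | 0 => intro θ; simp [cf]
    | 1 =>
      intro θ
      have h3 : Real.sin (3*θ) = 3 * Real.sin θ - 4 * Real.sin θ ^ 3 := Real.sin_three_mul θ
      simp only [Finset.sum_range_succ, Finset.sum_range_zero]
      norm_num [cf]
      linear_combination -h3
    | (m+2) =>
      intro θ
      have h0 := ih m (by omega) θ
      have h1 := ih (m+1) (by omega) θ
      have key := keyrec m (Real.sin θ)
      have comb : Real.sin ((2*(m:ℝ)+5)*θ)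
          = 2*(1-2*Real.sin θ^2) * Real.sin ((2*(m:ℝ)+3)*θ) - Real.sin ((2*(m:ℝ)+1)*θ) := by
        have e1 := Real.sin_add ((2*(m:ℝ)+3)*θ) (2*θ)
        have e2 := Real.sin_sub ((2*(m:ℝ)+3)*θ) (2*θ)
        have e3 : Real.cos (2*θ) = 1 - 2*Real.sin θ^2 := by
          rw [Real.cos_two_mul, Real.cos_sq']
          ring
        rw [show (2*(m:ℝ)+5)*θ = (2*(m:ℝ)+3)*θ + 2*θ by ring,
            show (2*(m:ℝ)+1)*θ = (2*(m:ℝ)+3)*θ - 2*θ by ring]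
        rw [e1, e2, e3]
        ring
      push_cast at h1 ⊢
      rw [(by omega : m + 2 + 1 = m + 3), (by omega : m + 1 + 1 = m + 2)] at *
      rw [show 2*((m:ℝ)+2)+1 = 2*(m:ℝ)+5 by ring, comb]
      rw [show 2*((m:ℝ)+1)+1 = 2*(m:ℝ)+3 by ring] at h1
      linear_combination key + 2*(1-2*Real.sin θ^2) * h1 - h0

lemma Fcos (m : ℕ) (θ : ℝ) :
    (2*(m:ℝ)+1) * ∑ j ∈ range (m+1), cf m j * Real.cos θ ^ (2*j+1)
      = (-1:ℝ)^m * Real.cos ((2*(m:ℝ)+1)*θ) := by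
  have H := Fsin m (π/2 - θ)
  rw [Real.sin_pi_div_two_sub] at H
  have harg : (2*(m:ℝ)+1)*(π/2 - θ) = ((m+1:ℕ):ℝ)*π - (π/2 + (2*(m:ℝ)+1)*θ) := by
    push_cast; ring
  rw [harg, Real.sin_nat_mul_pi_sub] at H
  have hs : Real.sin (π/2 + (2*(m:ℝ)+1)*θ) = Real.cos ((2*(m:ℝ)+1)*θ) := by
    rw [show π/2 + (2*(m:ℝ)+1)*θ = π/2 - (-((2*(m:ℝ)+1)*θ)) by ring,
        Real.sin_pi_div_two_sub, Real.cos_neg]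
  rw [hs] at H
  rw [H, pow_succ]
  ring

lemma expsum (n r : ℕ) (hn : 1 ≤ n) (h : ¬ n ∣ r) :
    (∑ k ∈ range n, Real.cos (2*π*r*k/n)) = 0 ∧ (∑ k ∈ range n, Real.sin (2*π*r*k/n)) = 0 := by
  have hn0 : (n:ℝ) ≠ 0 := by positivity
  have hnc : (n:ℂ) ≠ 0 := Nat.cast_ne_zero.mpr (by omega)
  have h2π : (2*π:ℝ) ≠ 0 := by positivity
  set z : ℂ := Complex.exp ((2*π*r/n : ℝ) * Complex.I) with hz
  have hz1 : z ≠ 1 := by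
    intro heq
    rw [hz, Complex.exp_eq_one_iff] at heq
    obtain ⟨k, hk⟩ := heq
    have hk2 : ((2*π*r/n : ℝ) : ℂ) = (k:ℂ) * (2*π) := by
      apply mul_right_cancel₀ Complex.I_ne_zero
      rw [hk]; ring
    have hk3 : (2*π*r/n : ℝ) = (k:ℝ) * (2*π) := by exact_mod_cast hk2
    have hr : (r:ℝ) = (k:ℝ) * n := by
      apply mul_left_cancel₀ h2π
      field_simp at hk3
      linear_combination (2*π) * hk3
    have hrz : (r:ℤ) = k * n := by exact_mod_cast hr
    exact h (Int.natCast_dvd_natCast.mp ⟨k, by rw [hrz]; ring⟩)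
  have hzn : z ^ n = 1 := by
    rw [hz, ← Complex.exp_nat_mul]
    rw [show (n:ℂ) * (((2*π*r/n : ℝ)) * Complex.I) = (r:ℂ) * (2*π*Complex.I) by
      push_cast; field_simp]
    exact_mod_cast Complex.exp_int_mul_two_pi_mul_I r
  have hgeom : ∑ k ∈ range n, z ^ k = 0 := by
    rw [geom_sum_eq hz1, hzn]
    simp
  have hzk : ∀ k : ℕ, z ^ k = Complex.exp (((2*π*r*k/n : ℝ)) * Complex.I) := by
    intro k
    rw [hz, ← Complex.exp_nat_mul]
    congr 1
    push_cast
    ring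
  constructor
  · have hre : ∑ k ∈ range n, Real.cos (2*π*r*k/n) = (∑ k ∈ range n, z^k).re := by
      rw [Complex.re_sum]
      apply Finset.sum_congr rfl
      intro k _
      rw [hzk k, Complex.exp_ofReal_mul_I_re]
    rw [hre, hgeom, Complex.zero_re]
  · have him : ∑ k ∈ range n, Real.sin (2*π*r*k/n) = (∑ k ∈ range n, z^k).im := by
      rw [Complex.im_sum]
      apply Finset.sum_congr rfl
      intro k _
      rw [hzk k, Complex.exp_ofReal_mul_I_im]
    rw [him, hgeom, Complex.zero_im]

theorem stmt_6 (m n : ℕ) (hn : 1 ≤ n) (hdvd : ¬ n ∣ 2 * m + 1) :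
    ∑ j ∈ Finset.range (m + 1), ((-4 : ℝ) ^ j / (2 * j + 1)) * (Nat.choose (m + j) (2 * j)) *
      ∑ k ∈ Finset.range n,
        (Real.sin (2 * k * π / n) ^ (2 * j + 1) + Real.cos (2 * k * π / n) ^ (2 * j + 1))
    = 0 := by
  have h2m1 : (2*(m:ℝ)+1) ≠ 0 := by positivity
  have key : (2*(m:ℝ)+1) * ∑ j ∈ Finset.range (m + 1),
      ((-4 : ℝ) ^ j / (2 * j + 1)) * (Nat.choose (m + j) (2 * j)) *
      ∑ k ∈ Finset.range n,
        (Real.sin (2 * k * π / n) ^ (2 * j + 1) + Real.cos (2 * k * π / n) ^ (2 * j + 1)) = 0 := by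
    have step1 : ∀ j ∈ range (m+1),
        ((-4 : ℝ) ^ j / (2 * j + 1)) * (Nat.choose (m + j) (2 * j)) *
          ∑ k ∈ Finset.range n,
            (Real.sin (2 * k * π / n) ^ (2 * j + 1) + Real.cos (2 * k * π / n) ^ (2 * j + 1))
        = ∑ k ∈ Finset.range n, (cf m j * Real.sin (2 * k * π / n) ^ (2 * j + 1)
            + cf m j * Real.cos (2 * k * π / n) ^ (2 * j + 1)) := by
      intro j _
      rw [Finset.mul_sum]
      apply Finset.sum_congr rfl
      intro k _
      rw [cf]
      ring
    rw [Finset.sum_congr rfl step1, Finset.sum_comm, Finset.mul_sum]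
    have step2 : ∀ k ∈ range n,
        (2*(m:ℝ)+1) * ∑ j ∈ range (m+1), (cf m j * Real.sin (2 * k * π / n) ^ (2 * j + 1)
            + cf m j * Real.cos (2 * k * π / n) ^ (2 * j + 1))
        = Real.sin ((2*(m:ℝ)+1) * (2 * k * π / n))
          + (-1:ℝ)^m * Real.cos ((2*(m:ℝ)+1) * (2 * k * π / n)) := by
      intro k _
      rw [Finset.sum_add_distrib]
      have hs := Fsin m (2 * k * π / n)
      have hc := Fcos m (2 * k * π / n)
      linear_combination hs + hc
    rw [Finset.sum_congr rfl step2, Finset.sum_add_distrib]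
    obtain ⟨hc0, hs0⟩ := expsum n (2*m+1) hn hdvd
    have e1 : ∀ k ∈ range n,
        Real.sin ((2*(m:ℝ)+1) * (2 * k * π / n)) = Real.sin (2*π*(2*m+1:ℕ)*k/n) := by
      intro k _; congr 1; push_cast; ring
    have e2 : ∀ k ∈ range n,
        (-1:ℝ)^m * Real.cos ((2*(m:ℝ)+1) * (2 * k * π / n))
          = (-1:ℝ)^m * Real.cos (2*π*(2*m+1:ℕ)*k/n) := by
      intro k _; congr 2; push_cast; ring
    rw [Finset.sum_congr rfl e1, Finset.sum_congr rfl e2, ← Finset.mul_sum, hs0, hc0]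
    ring
  exact (mul_eq_zero.mp key).resolve_left h2m1
end

section
/- For every integer m ≥ 0 and real x with cos(arcsin(x/2)) ≠ 0 (equivalently |x| < 2), ∑_{j=0}^m (-1)^j C(m+j, 2j) x^{2j} = cos((2m+1)·arcsin(x/2)) / cos(arcsin(x/2)). -/
open Real Finset

lemma choose_id_s12 (n k : ℕ) :
    (n+2).choose (k+2) + n.choose (k+2) = 2 * ((n+1).choose (k+2)) + n.choose k := by
  simp [Nat.choose_succ_succ]; ring

lemma term_id (m j : ℕ) (x : ℝ) :
    (-1:ℝ)^(j+1) * ((m + 2 + (j+1)).choose (2*(j+1))) * x^(2*(j+1))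
      = 2 * ((-1:ℝ)^(j+1) * ((m + 1 + (j+1)).choose (2*(j+1))) * x^(2*(j+1)))
        - x^2 * ((-1:ℝ)^j * ((m + 1 + j).choose (2*j)) * x^(2*j))
        - (-1:ℝ)^(j+1) * ((m + (j+1)).choose (2*(j+1))) * x^(2*(j+1)) := by
  have h := choose_id_s12 (m + 1 + j) (2*j)
  have hR := congrArg (Nat.cast : ℕ → ℝ) h
  push_cast at hR
  rw [show m + 2 + (j+1) = m + 1 + j + 2 from by omega,
      show m + 1 + (j+1) = m + 1 + j + 1 from by omega,
      show m + (j+1) = m + 1 + j from by omega,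
      show 2*(j+1) = 2*j+2 from by omega]
  linear_combination ((-1:ℝ)^(j+1) * x^(2*j+2)) * hR

lemma sum_rec (m : ℕ) (x : ℝ) :
    ∑ j ∈ range (m + 2 + 1), (-1:ℝ)^j * ((m + 2 + j).choose (2*j)) * x^(2*j)
      = (2 - x^2) * ∑ j ∈ range (m + 1 + 1), (-1:ℝ)^j * ((m + 1 + j).choose (2*j)) * x^(2*j)
        - ∑ j ∈ range (m + 1), (-1:ℝ)^j * ((m + j).choose (2*j)) * x^(2*j) := by
  have hB : ∑ j ∈ range (m + 2), (-1:ℝ)^j * ((m + 1 + j).choose (2*j)) * x^(2*j)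
      = ∑ j ∈ range (m + 3), (-1:ℝ)^j * ((m + 1 + j).choose (2*j)) * x^(2*j) := by
    rw [sum_range_succ (n := m + 2)]
    rw [Nat.choose_eq_zero_of_lt (by omega)]
    simp
  have hC : ∑ j ∈ range (m + 1), (-1:ℝ)^j * ((m + j).choose (2*j)) * x^(2*j)
      = ∑ j ∈ range (m + 3), (-1:ℝ)^j * ((m + j).choose (2*j)) * x^(2*j) := by
    rw [sum_range_succ (n := m + 2), sum_range_succ (n := m + 1)]
    rw [Nat.choose_eq_zero_of_lt (show m + (m+1) < 2*(m+1) by omega),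
        Nat.choose_eq_zero_of_lt (show m + (m+2) < 2*(m+2) by omega)]
    simp
  have h2 : (2 - x^2) * ∑ j ∈ range (m + 1 + 1), (-1:ℝ)^j * ((m + 1 + j).choose (2*j)) * x^(2*j)
      = 2 * ∑ j ∈ range (m + 3), (-1:ℝ)^j * ((m + 1 + j).choose (2*j)) * x^(2*j)
        - x^2 * ∑ j ∈ range (m + 2), (-1:ℝ)^j * ((m + 1 + j).choose (2*j)) * x^(2*j) := by
    rw [← hB]; ring
  rw [h2, hC]
  rw [show m + 2 + 1 = m + 3 from rfl]
  rw [sum_range_succ' (fun j => (-1:ℝ)^j * ((m + 2 + j).choose (2*j)) * x^(2*j)) (m+2),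
      sum_range_succ' (fun j => (-1:ℝ)^j * ((m + 1 + j).choose (2*j)) * x^(2*j)) (m+2),
      sum_range_succ' (fun j => (-1:ℝ)^j * ((m + j).choose (2*j)) * x^(2*j)) (m+2)]
  have key : ∑ j ∈ range (m+2), (-1:ℝ)^(j+1) * ((m + 2 + (j+1)).choose (2*(j+1))) * x^(2*(j+1))
      = ∑ j ∈ range (m+2), (2 * ((-1:ℝ)^(j+1) * ((m + 1 + (j+1)).choose (2*(j+1))) * x^(2*(j+1)))
        - x^2 * ((-1:ℝ)^j * ((m + 1 + j).choose (2*j)) * x^(2*j))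
        - (-1:ℝ)^(j+1) * ((m + (j+1)).choose (2*(j+1))) * x^(2*(j+1))) :=
    Finset.sum_congr rfl (fun j _ => term_id m j x)
  simp only [Finset.sum_sub_distrib, ← Finset.mul_sum] at key
  simp only [mul_zero, add_zero, Nat.choose_zero_right, pow_zero, Nat.cast_one, mul_one, one_mul] at *
  linarith [key]

lemma cos_rec (a θ : ℝ) :
    Real.cos ((a+2)*θ) + Real.cos ((a-2)*θ) = 2 * Real.cos (2*θ) * Real.cos (a*θ) := by
  rw [show (a+2)*θ = a*θ + 2*θ from by ring, show (a-2)*θ = a*θ - 2*θ from by ring,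
      Real.cos_add, Real.cos_sub]
  ring

lemma main_aux (x θ : ℝ) (hs : Real.sin θ = x/2) (m : ℕ) :
    (∑ j ∈ range (m+1), (-1:ℝ)^j * ((m+j).choose (2*j)) * x^(2*j)) * Real.cos θ
      = Real.cos ((2*m+1)*θ) := by
  have hx2 : x = 2 * Real.sin θ := by linarith
  induction m using Nat.twoStepInduction with
  | zero => simp
  | one =>
    have h3 : (2 * ((1:ℕ):ℝ) + 1) * θ = 3 * θ := by push_cast; ring
    rw [h3, Real.cos_three_mul]
    rw [Finset.sum_range_succ, Finset.sum_range_one]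
    norm_num
    have hsc := Real.sin_sq_add_cos_sq θ
    linear_combination (-4*Real.cos θ)*hsc + (-(Real.cos θ)*(x + 2*Real.sin θ))*hx2
  | more m ih1 ih2 =>
    have hc2 : 2 * Real.cos (2*θ) = 2 - x^2 := by
      rw [Real.cos_two_mul]
      have hsc := Real.sin_sq_add_cos_sq θ
      linear_combination 4*hsc + (x + 2*Real.sin θ)*hx2
    have hcr : Real.cos ((2*((m:ℝ)+2)+1)*θ) + Real.cos ((2*(m:ℝ)+1)*θ)
        = 2 * Real.cos (2*θ) * Real.cos ((2*((m:ℝ)+1)+1)*θ) := by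
      have h := cos_rec (2*(m:ℝ)+3) θ
      rw [show (2*(m:ℝ)+3+2) = 2*((m:ℝ)+2)+1 from by ring,
          show (2*(m:ℝ)+3-2) = 2*(m:ℝ)+1 from by ring,
          show (2*(m:ℝ)+3) = 2*((m:ℝ)+1)+1 from by ring] at h
      exact h
    rw [sum_rec]
    push_cast at ih1 ih2 ⊢
    linear_combination (2 - x^2) * ih2 - ih1 - hcr
      - Real.cos ((2*((m:ℝ)+1)+1)*θ) * hc2

theorem stmt_12 (m : ℕ) (x : ℝ) (hx : Real.cos (Real.arcsin (x / 2)) ≠ 0) :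
    ∑ j ∈ Finset.range (m + 1), (-1 : ℝ) ^ j * (Nat.choose (m + j) (2 * j)) * x ^ (2 * j)
      = Real.cos ((2 * m + 1) * Real.arcsin (x / 2)) / Real.cos (Real.arcsin (x / 2)) := by
  have h1 : x / 2 ≤ 1 := by
    by_contra h
    push_neg at h
    rw [Real.arcsin_of_one_le h.le, Real.cos_pi_div_two] at hx
    exact hx rfl
  have h2 : -1 ≤ x / 2 := by
    by_contra h
    push_neg at h
    rw [Real.arcsin_of_le_neg_one h.le, Real.cos_neg, Real.cos_pi_div_two] at hx
    exact hx rfl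
  have hs : Real.sin (Real.arcsin (x/2)) = x/2 := Real.sin_arcsin h2 h1
  have := main_aux x (Real.arcsin (x/2)) hs m
  rw [eq_div_iff hx]
  exact this
end
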